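/- Let (Ω, 𝓕, P) be a probability space and let B be a measurable set. Suppose that for every ε > 0 there exist measurable sets C and D such that C and D are independent events (P(C ∩ D) = P(C)·P(D)), P(B Δ C) ≤ ε and P(B Δ D) ≤ ε, where Δ denotes symmetric difference. Then P(B) = 0 or P(B) = 1. -/

import Mathlib

open MeasureTheory ENNReal

/-- If an event `B` can be approximated arbitrarily well (in symmetric difference)
by pairs of independent events, then `B` has probability `0` or `1`. -/
theorem stmt_0 {Ω : Type*} [MeasurableSpace Ω] (P : Measure Ω) [IsProbabilityMeasure P]
    (B : Set Ω) (hB : MeasurableSet B)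
    (h : ∀ ε : ℝ≥0∞, 0 < ε → ∃ C D : Set Ω, MeasurableSet C ∧ MeasurableSet D ∧
      P (C ∩ D) = P C * P D ∧ P (symmDiff B C) ≤ ε ∧ P (symmDiff B D) ≤ ε) :
    P B = 0 ∨ P B = 1 := by
  set b : ℝ := (P B).toReal with hb
  have hble : b ≤ 1 := by
    rw [hb]
    exact ENNReal.toReal_le_of_le_ofReal zero_le_one (by simpa using prob_le_one)
  have hbnn : 0 ≤ b := ENNReal.toReal_nonneg
  have key : ∀ ε : ℝ, 0 < ε → |b - b * b| ≤ 4 * ε := by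
    intro ε hε
    obtain ⟨C, D, hC, hD, hind, hBC, hBD⟩ := h (ENNReal.ofReal ε) (by positivity)
    set c : ℝ := (P C).toReal
    set d : ℝ := (P D).toReal
    have hdle : d ≤ 1 := ENNReal.toReal_le_of_le_ofReal zero_le_one (by simpa using prob_le_one)
    have hdnn : 0 ≤ d := ENNReal.toReal_nonneg
    have hεC : (P (symmDiff B C)).toReal ≤ ε :=
      ENNReal.toReal_le_of_le_ofReal hε.le hBC
    have hεD : (P (symmDiff B D)).toReal ≤ ε :=
      ENNReal.toReal_le_of_le_ofReal hε.le hBD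
    have hc : |b - c| ≤ ε :=
      le_trans (abs_measureReal_sub_le_measureReal_symmDiff hB.nullMeasurableSet
        hC.nullMeasurableSet) hεC
    have hd : |b - d| ≤ ε :=
      le_trans (abs_measureReal_sub_le_measureReal_symmDiff hB.nullMeasurableSet
        hD.nullMeasurableSet) hεD
    have hsub : symmDiff B (C ∩ D) ⊆ symmDiff B C ∪ symmDiff B D := by
      intro x hx
      simp only [Set.mem_symmDiff, Set.mem_union, Set.mem_inter_iff] at hx ⊢
      tauto
    have hCD : (P (symmDiff B (C ∩ D))).toReal ≤ 2 * ε := by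
      have h1 : P (symmDiff B (C ∩ D)) ≤ P (symmDiff B C) + P (symmDiff B D) :=
        le_trans (measure_mono hsub) (measure_union_le _ _)
      have h2 : (P (symmDiff B (C ∩ D))).toReal ≤
          (P (symmDiff B C)).toReal + (P (symmDiff B D)).toReal := by
        rw [← ENNReal.toReal_add (measure_ne_top _ _) (measure_ne_top _ _)]
        exact ENNReal.toReal_mono (by finiteness) h1
      linarith
    have hcd : |b - c * d| ≤ 2 * ε := by
      have h1 : |b - (P (C ∩ D)).toReal| ≤ (P (symmDiff B (C ∩ D))).toReal :=
        abs_measureReal_sub_le_measureReal_symmDiff hB.nullMeasurableSet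
          (hC.inter hD).nullMeasurableSet
      have h2 : (P (C ∩ D)).toReal = c * d := by
        rw [hind, ENNReal.toReal_mul]
      rw [h2] at h1
      linarith
    have h3 : |c * d - b * d| ≤ ε := by
      have heq : |c * d - b * d| = |b - c| * d := by
        rw [← sub_mul, abs_mul, abs_of_nonneg hdnn, abs_sub_comm]
      rw [heq]
      calc |b - c| * d ≤ ε * 1 := mul_le_mul hc hdle hdnn hε.le
        _ = ε := mul_one ε
    have h4 : |b * d - b * b| ≤ ε := by
      have : |b * d - b * b| = b * |d - b| := by
        rw [← mul_sub, abs_mul, abs_of_nonneg hbnn]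
      rw [this, abs_sub_comm]
      calc b * |b - d| ≤ 1 * ε := mul_le_mul hble hd (abs_nonneg _) zero_le_one
        _ = ε := one_mul ε
    calc |b - b * b| ≤ |b - c * d| + |c * d - b * d| + |b * d - b * b| := by
          have := abs_sub_le b (c * d) (b * d)
          have := abs_sub_le b (b * d) (b * b)
          have := abs_sub_le (c * d) (b * d) (b * b)
          linarith [abs_sub_le b (c * d) (b * b)]
      _ ≤ 2 * ε + ε + ε := by linarith
      _ = 4 * ε := by ring
  have hbb : b = b * b := by
    by_contra hne
    have hpos : 0 < |b - b * b| := by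
      rw [abs_pos]; intro h0; exact hne (by linarith)
    have := key (|b - b * b| / 8) (by positivity)
    linarith
  have hz : b * (1 - b) = 0 := by nlinarith [hbb]
  rcases mul_eq_zero.mp hz with h0 | h1
  all_goals (first | (replace h1 : b = 1 := by linarith) | skip)
  · left
    have : P B ≠ ⊤ := measure_ne_top _ _
    exact (ENNReal.toReal_eq_zero_iff _).mp h0 |>.resolve_right this
  · right
    exact (ENNReal.toReal_eq_one_iff _).mp h1
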